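/- Let f(x) = x/√(1+x²) and let h : ℝ → [0, ∞) be an integrable function with ∫_ℝ h = 1 and with compact support. Then the function x ↦ ((f ∗ h)(x)² − 1)(1 + x²) is bounded on ℝ, where (f ∗ h)(x) = ∫_ℝ f(x − t) h(t) dt. -/

import Mathlib

open MeasureTheory

private lemma fabs (u : ℝ) : |u / Real.sqrt (1 + u ^ 2)| ≤ 1 := by
  have hs : (0:ℝ) < Real.sqrt (1 + u ^ 2) := Real.sqrt_pos.2 (by positivity)
  rw [abs_div, abs_of_pos hs, div_le_one hs]
  calc |u| = Real.sqrt (u ^ 2) := (Real.sqrt_sq_eq_abs u).symm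
    _ ≤ Real.sqrt (1 + u ^ 2) := Real.sqrt_le_sqrt (by linarith)

private lemma fbound (u : ℝ) (hu : 0 ≤ u) :
    1 - u / Real.sqrt (1 + u ^ 2) ≤ 1 / (1 + u ^ 2) := by
  have hs : (0:ℝ) < Real.sqrt (1 + u ^ 2) := Real.sqrt_pos.2 (by positivity)
  have hsq : Real.sqrt (1 + u ^ 2) ^ 2 = 1 + u ^ 2 := Real.sq_sqrt (by positivity)
  have hus : u ≤ Real.sqrt (1 + u ^ 2) := by nlinarith
  have h1 : 1 - u / Real.sqrt (1 + u ^ 2)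
      = (Real.sqrt (1 + u ^ 2) - u) / Real.sqrt (1 + u ^ 2) := by
    field_simp
  rw [h1, div_le_div_iff₀ hs (by positivity)]
  nlinarith [mul_nonneg (mul_nonneg hu hs.le) (sub_nonneg.2 hus)]

private lemma fbound' (u : ℝ) (hu : u ≤ 0) :
    1 + u / Real.sqrt (1 + u ^ 2) ≤ 1 / (1 + u ^ 2) := by
  have := fbound (-u) (by linarith)
  have h2 : (-u) ^ 2 = u ^ 2 := by ring
  rw [h2, neg_div] at this
  linarith

/-- With `f(x) = x/√(1+x²)` and `h ≥ 0` integrable of integral one with compact support,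
the function `x ↦ ((f ∗ h)(x)² − 1)(1 + x²)` is bounded on `ℝ`. -/
theorem stmt7 (h : ℝ → ℝ) (hint : Integrable h) (hpos : ∀ t, 0 ≤ h t)
    (hone : (∫ t, h t) = 1) (hsupp : HasCompactSupport h) :
    ∃ M : ℝ, ∀ x : ℝ,
      |((∫ t, ((x - t) / Real.sqrt (1 + (x - t) ^ 2)) * h t) ^ 2 - 1) * (1 + x ^ 2)| ≤ M := by
  have hcont : Continuous fun u : ℝ => u / Real.sqrt (1 + u ^ 2) := by
    apply Continuous.div continuous_id (by continuity)
    intro u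
    positivity
  have hI : ∀ x : ℝ,
      Integrable (fun t => ((x - t) / Real.sqrt (1 + (x - t) ^ 2)) * h t) := by
    intro x
    apply hint.bdd_mul (c := 1) ((hcont.comp (by continuity)).aestronglyMeasurable)
    exact Filter.Eventually.of_forall (fun t => by simpa only [Real.norm_eq_abs, Function.comp_apply] using fabs (x - t))
  have habs : ∀ x : ℝ, |∫ t, ((x - t) / Real.sqrt (1 + (x - t) ^ 2)) * h t| ≤ 1 := by
    intro x
    calc |∫ t, ((x - t) / Real.sqrt (1 + (x - t) ^ 2)) * h t|
        ≤ ∫ t, |((x - t) / Real.sqrt (1 + (x - t) ^ 2)) * h t| := by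
          simpa only [Real.norm_eq_abs] using norm_integral_le_integral_norm
            (fun t => ((x - t) / Real.sqrt (1 + (x - t) ^ 2)) * h t)
      _ ≤ ∫ t, h t := by
          apply integral_mono (hI x).abs hint
          intro t
          show |((x - t) / Real.sqrt (1 + (x - t) ^ 2)) * h t| ≤ h t
          rw [abs_mul, abs_of_nonneg (hpos t)]
          exact mul_le_of_le_one_left (hpos t) (fabs _)
      _ = 1 := hone
  obtain ⟨R0, hR0⟩ := hsupp.isBounded.subset_closedBall 0
  set R : ℝ := max R0 0 with hRdef
  have hR0' : (0:ℝ) ≤ R := le_max_right _ _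
  have hRt : ∀ t : ℝ, h t ≠ 0 → |t| ≤ R := by
    intro t ht
    have : t ∈ tsupport h := subset_tsupport h (by simpa [Function.mem_support] using ht)
    have := hR0 this
    simp only [Metric.mem_closedBall, Real.dist_eq, sub_zero] at this
    exact this.trans (le_max_left _ _)
  refine ⟨8 + 2 * (1 + (2 * R) ^ 2), fun x => ?_⟩
  set g : ℝ := ∫ t, ((x - t) / Real.sqrt (1 + (x - t) ^ 2)) * h t with hg
  have hgb : -1 ≤ g ∧ g ≤ 1 := abs_le.1 (habs x)
  have hgsq : 0 ≤ 1 - g ^ 2 := by nlinarith [hgb.1, hgb.2]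
  have hxx : (0:ℝ) < 1 + x ^ 2 := by positivity
  rcases le_or_gt (2 * R) x with hx | hx
  · -- x ≥ 2R : bound 1 - g
    have hx0 : 0 ≤ x := le_trans (by positivity) hx
    have hptw : ∀ t, (1 - (x - t) / Real.sqrt (1 + (x - t) ^ 2)) * h t
        ≤ (4 / (1 + x ^ 2)) * h t := by
      intro t
      by_cases ht : h t = 0
      · simp [ht]
      · have htR := abs_le.1 (hRt t ht)
        have hu0 : 0 ≤ x - t := by linarith
        have h1 := fbound (x - t) hu0
        have h2 : 1 / (1 + (x - t) ^ 2) ≤ 4 / (1 + x ^ 2) := by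
          rw [div_le_div_iff₀ (by positivity) hxx]
          nlinarith
        exact mul_le_mul_of_nonneg_right (h1.trans h2) (hpos t)
    have hI2 : Integrable (fun t => (1 - (x - t) / Real.sqrt (1 + (x - t) ^ 2)) * h t) := by
      simpa [sub_mul, one_mul, Pi.sub_def] using hint.sub (hI x)
    have key : 1 - g ≤ 4 / (1 + x ^ 2) := by
      have e1 : ∫ t, (1 - (x - t) / Real.sqrt (1 + (x - t) ^ 2)) * h t = 1 - g := by
        simp only [sub_mul, one_mul]
        rw [integral_sub hint (hI x), hone]
      have e2 : ∫ t, (4 / (1 + x ^ 2)) * h t = 4 / (1 + x ^ 2) := by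
        rw [integral_const_mul, hone, mul_one]
      calc 1 - g = ∫ t, (1 - (x - t) / Real.sqrt (1 + (x - t) ^ 2)) * h t := e1.symm
        _ ≤ ∫ t, (4 / (1 + x ^ 2)) * h t :=
            integral_mono hI2 (hint.const_mul _) hptw
        _ = 4 / (1 + x ^ 2) := e2
    have h3 : (1 - g) * (1 + x ^ 2) ≤ 4 := by
      calc (1 - g) * (1 + x ^ 2) ≤ (4 / (1 + x ^ 2)) * (1 + x ^ 2) :=
            mul_le_mul_of_nonneg_right key hxx.le
        _ = 4 := by field_simp
    have h4 : (1 - g) * (1 + x ^ 2) * (1 + g) ≤ 4 * 2 :=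
      mul_le_mul h3 (by linarith [hgb.2]) (by linarith [hgb.1]) (by norm_num)
    rw [show (g ^ 2 - 1) * (1 + x ^ 2) = -((1 - g ^ 2) * (1 + x ^ 2)) by ring, abs_neg,
      abs_of_nonneg (mul_nonneg hgsq hxx.le)]
    nlinarith [h4, sq_nonneg R, hR0']
  rcases le_or_gt x (-(2 * R)) with hx' | hx'
  · -- x ≤ -2R : bound 1 + g
    have hx0 : x ≤ 0 := le_trans hx' (by linarith)
    have hptw : ∀ t, (1 + (x - t) / Real.sqrt (1 + (x - t) ^ 2)) * h t
        ≤ (4 / (1 + x ^ 2)) * h t := by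
      intro t
      by_cases ht : h t = 0
      · simp [ht]
      · have htR := abs_le.1 (hRt t ht)
        have hu0 : x - t ≤ 0 := by linarith
        have h1 := fbound' (x - t) hu0
        have h2 : 1 / (1 + (x - t) ^ 2) ≤ 4 / (1 + x ^ 2) := by
          rw [div_le_div_iff₀ (by positivity) hxx]
          nlinarith
        exact mul_le_mul_of_nonneg_right (h1.trans h2) (hpos t)
    have hI2 : Integrable (fun t => (1 + (x - t) / Real.sqrt (1 + (x - t) ^ 2)) * h t) := by
      simpa [add_mul, one_mul, Pi.add_def] using hint.add (hI x)
    have key : 1 + g ≤ 4 / (1 + x ^ 2) := by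
      have e1 : ∫ t, (1 + (x - t) / Real.sqrt (1 + (x - t) ^ 2)) * h t = 1 + g := by
        simp only [add_mul, one_mul]
        rw [integral_add hint (hI x), hone]
      have e2 : ∫ t, (4 / (1 + x ^ 2)) * h t = 4 / (1 + x ^ 2) := by
        rw [integral_const_mul, hone, mul_one]
      calc 1 + g = ∫ t, (1 + (x - t) / Real.sqrt (1 + (x - t) ^ 2)) * h t := e1.symm
        _ ≤ ∫ t, (4 / (1 + x ^ 2)) * h t :=
            integral_mono hI2 (hint.const_mul _) hptw
        _ = 4 / (1 + x ^ 2) := e2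
    have h3 : (1 + g) * (1 + x ^ 2) ≤ 4 := by
      calc (1 + g) * (1 + x ^ 2) ≤ (4 / (1 + x ^ 2)) * (1 + x ^ 2) :=
            mul_le_mul_of_nonneg_right key hxx.le
        _ = 4 := by field_simp
    have h4 : (1 + g) * (1 + x ^ 2) * (1 - g) ≤ 4 * 2 :=
      mul_le_mul h3 (by linarith [hgb.1]) (by linarith [hgb.2]) (by norm_num)
    rw [show (g ^ 2 - 1) * (1 + x ^ 2) = -((1 - g ^ 2) * (1 + x ^ 2)) by ring, abs_neg,
      abs_of_nonneg (mul_nonneg hgsq hxx.le)]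
    nlinarith [h4, sq_nonneg R, hR0']
  · -- |x| ≤ 2R
    have hxb : x ^ 2 ≤ (2 * R) ^ 2 := by nlinarith
    rw [show (g ^ 2 - 1) * (1 + x ^ 2) = -((1 - g ^ 2) * (1 + x ^ 2)) by ring, abs_neg,
      abs_of_nonneg (mul_nonneg hgsq hxx.le)]
    nlinarith [mul_le_mul (show 1 - g ^ 2 ≤ 1 by nlinarith [sq_nonneg g])
      (show 1 + x ^ 2 ≤ 1 + (2 * R) ^ 2 by linarith) hxx.le zero_le_one, sq_nonneg R]
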